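/- For compact Hausdorff topological spaces P and Q, there is a homeomorphism C(P) × C(Q) ≅ C(P ⋆ Q) between the product of the open cones on P and Q and the open cone on the join of P and Q. -/

import Mathlib

/-- The relation generating the quotient `(Z × [0,∞)) / ∼` with `(z,0) ∼ (z',0)`. -/
def ConeRel (Z : Type) (a b : Z × {t : ℝ // 0 ≤ t}) : Prop :=
  (a.2 : ℝ) = 0 ∧ (b.2 : ℝ) = 0

/-- The open cone `(Z × [0,∞)) / ∼` collapsing `Z × {0}` to a point. -/
def Cone (Z : Type) [TopologicalSpace Z] : Type := Quot (ConeRel Z)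

instance (Z : Type) [TopologicalSpace Z] : TopologicalSpace (Cone Z) :=
  inferInstanceAs (TopologicalSpace (Quot (ConeRel Z)))

/-- The relation generating the join: `(p,0,q) ∼ (p,0,q')` and `(p,1,q) ∼ (p',1,q)`. -/
def JoinRel (P Q : Type) (a b : P × (Set.Icc (0:ℝ) 1) × Q) : Prop :=
  ((a.2.1 : ℝ) = 0 ∧ (b.2.1 : ℝ) = 0 ∧ a.1 = b.1) ∨
  ((a.2.1 : ℝ) = 1 ∧ (b.2.1 : ℝ) = 1 ∧ a.2.2 = b.2.2)

/-- The join `P ⋆ Q`, the quotient of `P × [0,1] × Q` by the join relation. -/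
def Join (P Q : Type) [TopologicalSpace P] [TopologicalSpace Q] : Type :=
  Quot (JoinRel P Q)

instance (P Q : Type) [TopologicalSpace P] [TopologicalSpace Q] :
    TopologicalSpace (Join P Q) :=
  inferInstanceAs (TopologicalSpace (Quot (JoinRel P Q)))

namespace StmtAux

open Set Topology

instance : LocallyCompactSpace {t : ℝ // 0 ≤ t} :=
  (isClosed_Ici (a := (0:ℝ))).locallyCompactSpace

section ConeBasics

variable (Z : Type) [TopologicalSpace Z]

/-- The radius function on the cone. -/
def rad : Cone Z → ℝ :=
  Quot.lift (fun x => (x.2 : ℝ)) (fun a b h => by rw [h.1, h.2])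

lemma continuous_rad : Continuous (rad Z) :=
  continuous_quot_lift _ (continuous_subtype_val.comp continuous_snd)

lemma rad_mk (x : Z × {t : ℝ // 0 ≤ t}) : rad Z (Quot.mk _ x) = (x.2 : ℝ) := rfl

variable {Z}

/-- Equality in the cone forces equality of representatives unless both radii vanish. -/
lemma cone_eq_elim {a b : Z × {t : ℝ // 0 ≤ t}}
    (h : (Quot.mk (ConeRel Z) a : Cone Z) = Quot.mk (ConeRel Z) b) :
    a = b ∨ ((a.2 : ℝ) = 0 ∧ (b.2 : ℝ) = 0) := by
  classical
  have key := congrArg (Quot.lift (fun x : Z × {t : ℝ // 0 ≤ t} =>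
      if (x.2 : ℝ) = 0 then (none : Option (Z × {t : ℝ // 0 ≤ t})) else some x)
      (fun a b hab => by rw [if_pos hab.1, if_pos hab.2])) h
  by_cases ha : (a.2 : ℝ) = 0 <;> by_cases hb : (b.2 : ℝ) = 0
  · exact Or.inr ⟨ha, hb⟩
  · simp only [ha, hb, if_true, if_false] at key; exact absurd key (by simp)
  · simp only [ha, hb, if_true, if_false] at key; exact absurd key (by simp)
  · simp only [ha, hb, if_false] at key; exact Or.inl (by simpa using key)

/-- The image of `U × (0,∞)` is open in the cone. -/
lemma isOpen_cone_im (U : Set Z) (hU : IsOpen U) :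
    IsOpen (Quot.mk (ConeRel Z) '' (U ×ˢ {t : {t : ℝ // 0 ≤ t} | 0 < (t : ℝ)}) :
      Set (Cone Z)) := by
  have hpre : Quot.mk (ConeRel Z) ⁻¹'
      (Quot.mk (ConeRel Z) '' (U ×ˢ {t : {t : ℝ // 0 ≤ t} | 0 < (t : ℝ)}))
      = U ×ˢ {t : {t : ℝ // 0 ≤ t} | 0 < (t : ℝ)} := by
    ext x
    constructor
    · rintro ⟨s, hs, hmk⟩
      rcases cone_eq_elim hmk with rfl | ⟨h0, _⟩
      · exact hs
      · exact absurd h0 (ne_of_gt hs.2)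
    · exact fun hx => Set.mem_image_of_mem _ hx
  have : IsOpen (U ×ˢ {t : {t : ℝ // 0 ≤ t} | 0 < (t : ℝ)}) :=
    hU.prod ((isOpen_Ioi (a := (0:ℝ))).preimage continuous_subtype_val)
  rw [show (instTopologicalSpaceCone Z) =
      inferInstanceAs (TopologicalSpace (Quot (ConeRel Z))) from rfl]
  show IsOpen (Quot.mk (ConeRel Z) ⁻¹' (Quot.mk (ConeRel Z) '' (U ×ˢ {t : {t : ℝ // 0 ≤ t} | 0 < (t : ℝ)})))
  rw [hpre] at *
  exact this

instance coneT2 [T2Space Z] : T2Space (Cone Z) := by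
  constructor
  intro x y hxy
  induction x using Quot.ind with | _ a => ?_
  induction y using Quot.ind with | _ b => ?_
  by_cases hr : (a.2 : ℝ) = (b.2 : ℝ)
  · by_cases h0 : (a.2 : ℝ) = 0
    · exact absurd (Quot.sound ⟨h0, hr ▸ h0⟩) hxy
    · have hz : a.1 ≠ b.1 := by
        intro h
        exact hxy (by rw [show a = b from Prod.ext h (Subtype.ext hr)])
      obtain ⟨U, V, hU, hV, haU, hbV, hUV⟩ := t2_separation hz
      have hapos : (0:ℝ) < a.2 := lt_of_le_of_ne a.2.2 (Ne.symm h0)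
      have hbpos : (0:ℝ) < b.2 := hr ▸ hapos
      refine ⟨_, _, isOpen_cone_im U hU, isOpen_cone_im V hV,
        ⟨a, ⟨haU, hapos⟩, rfl⟩, ⟨b, ⟨hbV, hbpos⟩, rfl⟩, ?_⟩
      rw [Set.disjoint_left]
      rintro z ⟨s, hs, rfl⟩ ⟨t, ht, hts⟩
      rcases cone_eq_elim hts with rfl | ⟨h0t, _⟩
      · exact Set.disjoint_left.1 hUV hs.1 ht.1
      · exact absurd h0t (ne_of_gt ht.2)
  · exact separated_by_continuous (continuous_rad Z) hr

end ConeBasics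

section Main

variable (P Q : Type) [TopologicalSpace P] [TopologicalSpace Q]

/-- The core map `(P × [0,1] × Q) × [0,∞) → C(P) × C(Q)`,
`((p,u,q),r) ↦ ([p, r(1-u)], [q, ru])`. -/
def hcore : (P × (Set.Icc (0:ℝ) 1) × Q) × {t : ℝ // 0 ≤ t} → Cone P × Cone Q :=
  fun x =>
    (Quot.mk _ (x.1.1, ⟨(x.2 : ℝ) * (1 - (x.1.2.1 : ℝ)),
        mul_nonneg x.2.2 (by linarith [x.1.2.1.2.2])⟩),
     Quot.mk _ (x.1.2.2, ⟨(x.2 : ℝ) * (x.1.2.1 : ℝ),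
        mul_nonneg x.2.2 x.1.2.1.2.1⟩))

lemma hcore_cont : Continuous (hcore P Q) := by
  have hr : Continuous fun x : (P × (Set.Icc (0:ℝ) 1) × Q) × {t : ℝ // 0 ≤ t} =>
      (x.2 : ℝ) := continuous_subtype_val.comp continuous_snd
  have hu : Continuous fun x : (P × (Set.Icc (0:ℝ) 1) × Q) × {t : ℝ // 0 ≤ t} =>
      (x.1.2.1 : ℝ) :=
    continuous_subtype_val.comp (continuous_fst.comp (continuous_snd.comp continuous_fst))
  refine Continuous.prodMk ?_ ?_
  · exact continuous_quot_mk.comp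
      (((continuous_fst.comp continuous_fst)).prodMk
        ((hr.mul (continuous_const.sub hu)).subtype_mk _))
  · exact continuous_quot_mk.comp
      ((continuous_snd.comp (continuous_snd.comp continuous_fst)).prodMk
        ((hr.mul hu).subtype_mk _))

lemma hcore_join_invariant (r : {t : ℝ // 0 ≤ t}) {a b : P × (Set.Icc (0:ℝ) 1) × Q}
    (hab : JoinRel P Q a b) : hcore P Q (a, r) = hcore P Q (b, r) := by
  obtain ⟨p, u, q⟩ := a
  obtain ⟨p', u', q'⟩ := b
  rcases hab with ⟨h1, h2, h3⟩ | ⟨h1, h2, h3⟩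
  · dsimp at h1 h2 h3
    subst h3
    dsimp only [hcore]
    refine Prod.ext ?_ ?_
    · dsimp only
      exact congrArg (Quot.mk (ConeRel P)) (Prod.ext rfl (Subtype.ext (by dsimp; rw [h1, h2])))
    · exact Quot.sound ⟨by dsimp; rw [h1, mul_zero], by dsimp; rw [h2, mul_zero]⟩
  · dsimp at h1 h2 h3
    subst h3
    dsimp only [hcore]
    refine Prod.ext ?_ ?_
    · exact Quot.sound ⟨by dsimp; rw [h1]; ring, by dsimp; rw [h2]; ring⟩
    · dsimp only
      exact congrArg (Quot.mk (ConeRel Q)) (Prod.ext rfl (Subtype.ext (by dsimp; rw [h1, h2])))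

/-- The map `C(P ⋆ Q) → C(P) × C(Q)`. -/
def gmap : Cone (Join P Q) → Cone P × Cone Q :=
  Quot.lift
    (fun jr : Join P Q × {t : ℝ // 0 ≤ t} =>
      Quot.lift (fun x => hcore P Q (x, jr.2)) (fun _ _ h => hcore_join_invariant P Q jr.2 h)
        jr.1)
    (by
      rintro ⟨j, r⟩ ⟨j', r'⟩ ⟨h1, h2⟩
      dsimp at h1 h2
      induction j using Quot.ind with | _ x => ?_
      induction j' using Quot.ind with | _ y => ?_
      refine Prod.ext ?_ ?_
      · exact Quot.sound ⟨by dsimp; rw [h1, zero_mul], by dsimp; rw [h2, zero_mul]⟩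
      · exact Quot.sound ⟨by dsimp; rw [h1, zero_mul], by dsimp; rw [h2, zero_mul]⟩)

lemma gmap_mk (x : P × (Set.Icc (0:ℝ) 1) × Q) (r : {t : ℝ // 0 ≤ t}) :
    gmap P Q (Quot.mk _ (Quot.mk _ x, r)) = hcore P Q (x, r) := rfl

lemma gmap_cont : Continuous (gmap P Q) := by
  apply continuous_quot_lift
  exact (isQuotientMap_quot_mk (r := JoinRel P Q)).continuous_lift_prod_left (hcore_cont P Q)

lemma gmap_surjective : Function.Surjective (gmap P Q) := by
  rintro ⟨cp, cq⟩
  induction cp using Quot.ind with | _ a => ?_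
  induction cq using Quot.ind with | _ b => ?_
  obtain ⟨p, s⟩ := a
  obtain ⟨q, t⟩ := b
  by_cases h0 : (s : ℝ) + (t : ℝ) = 0
  · have hs : (s : ℝ) = 0 := by linarith [s.2, t.2]
    have ht : (t : ℝ) = 0 := by linarith [s.2, t.2]
    refine ⟨Quot.mk _ (Quot.mk _ (p, ⟨0, le_refl 0, zero_le_one⟩, q), ⟨0, le_refl 0⟩), ?_⟩
    rw [gmap_mk]
    dsimp only [hcore]
    refine Prod.ext ?_ ?_
    · exact Quot.sound ⟨by dsimp; ring, hs⟩
    · exact Quot.sound ⟨by dsimp; ring, ht⟩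
  · have hr : (0:ℝ) < (s : ℝ) + (t : ℝ) :=
      lt_of_le_of_ne (add_nonneg s.2 t.2) (Ne.symm h0)
    have hu0 : 0 ≤ (t : ℝ) / ((s : ℝ) + (t : ℝ)) := div_nonneg t.2 hr.le
    have hu1 : (t : ℝ) / ((s : ℝ) + (t : ℝ)) ≤ 1 := by
      rw [div_le_one hr]; linarith [s.2]
    refine ⟨Quot.mk _ (Quot.mk _ (p, ⟨(t : ℝ) / ((s : ℝ) + (t : ℝ)), hu0, hu1⟩, q),
      ⟨(s : ℝ) + (t : ℝ), add_nonneg s.2 t.2⟩), ?_⟩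
    rw [gmap_mk]
    dsimp only [hcore]
    refine Prod.ext ?_ ?_
    · dsimp only
      refine congrArg (Quot.mk (ConeRel P)) (Prod.ext rfl (Subtype.ext ?_))
      show ((s : ℝ) + (t : ℝ)) * (1 - (t : ℝ) / ((s : ℝ) + (t : ℝ))) = (s : ℝ)
      rw [mul_sub, mul_one, ← mul_div_assoc, mul_div_cancel_left₀ _ (ne_of_gt hr)]
      ring
    · dsimp only
      refine congrArg (Quot.mk (ConeRel Q)) (Prod.ext rfl (Subtype.ext ?_))
      show ((s : ℝ) + (t : ℝ)) * ((t : ℝ) / ((s : ℝ) + (t : ℝ))) = (t : ℝ)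
      rw [← mul_div_assoc, mul_div_cancel_left₀ _ (ne_of_gt hr)]

lemma gmap_injective : Function.Injective (gmap P Q) := by
  intro x y
  induction x using Quot.ind with | _ a => ?_
  induction y using Quot.ind with | _ b => ?_
  obtain ⟨j, r⟩ := a
  induction j using Quot.ind with | _ x => ?_
  obtain ⟨j', r'⟩ := b
  induction j' using Quot.ind with | _ y => ?_
  obtain ⟨p, u, q⟩ := x
  obtain ⟨p', u', q'⟩ := y
  intro h
  rw [gmap_mk, gmap_mk] at h
  have h1 := congrArg Prod.fst h
  have h2 := congrArg Prod.snd h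
  dsimp only [hcore] at h1 h2
  have hsum : (r : ℝ) = (r : ℝ) * (1 - (u : ℝ)) + (r : ℝ) * (u : ℝ) := by ring
  have hsum' : (r' : ℝ) = (r' : ℝ) * (1 - (u' : ℝ)) + (r' : ℝ) * (u' : ℝ) := by ring
  rcases cone_eq_elim h1 with hp | hp <;> rcases cone_eq_elim h2 with hq | hq
  · -- both representatives equal
    have hp1 : p = p' := congrArg Prod.fst hp
    have hpv : (r : ℝ) * (1 - (u : ℝ)) = (r' : ℝ) * (1 - (u' : ℝ)) :=
      congrArg (fun z => ((z.2 : {t : ℝ // 0 ≤ t}) : ℝ)) hp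
    have hq1 : q = q' := congrArg Prod.fst hq
    have hqv : (r : ℝ) * (u : ℝ) = (r' : ℝ) * (u' : ℝ) :=
      congrArg (fun z => ((z.2 : {t : ℝ // 0 ≤ t}) : ℝ)) hq
    have hrr : (r : ℝ) = (r' : ℝ) := by rw [hsum, hsum', hpv, hqv]
    by_cases hz : (r : ℝ) = 0
    · exact Quot.sound ⟨hz, by rw [← hrr]; exact hz⟩
    · have huu : (u : ℝ) = (u' : ℝ) := by
        have : (r : ℝ) * (u : ℝ) = (r : ℝ) * (u' : ℝ) := by rw [hqv, hrr]
        exact mul_left_cancel₀ hz this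
      subst hp1; subst hq1
      rw [show u = u' from Subtype.ext huu, show r = r' from Subtype.ext hrr]
  · -- second components collapse : u = 0 side
    have hp1 : p = p' := congrArg Prod.fst hp
    have hpv : (r : ℝ) * (1 - (u : ℝ)) = (r' : ℝ) * (1 - (u' : ℝ)) :=
      congrArg (fun z => ((z.2 : {t : ℝ // 0 ≤ t}) : ℝ)) hp
    have hq1 : (r : ℝ) * (u : ℝ) = 0 := hq.1
    have hq2 : (r' : ℝ) * (u' : ℝ) = 0 := hq.2
    have hrr : (r : ℝ) = (r' : ℝ) := by rw [hsum, hsum', hpv, hq1, hq2]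
    by_cases hz : (r : ℝ) = 0
    · exact Quot.sound ⟨hz, by rw [← hrr]; exact hz⟩
    · have hu : (u : ℝ) = 0 := by
        rcases mul_eq_zero.1 hq1 with h | h
        · exact absurd h hz
        · exact h
      have hu' : (u' : ℝ) = 0 := by
        rcases mul_eq_zero.1 hq2 with h | h
        · exact absurd h (hrr ▸ hz)
        · exact h
      have hjoin : (Quot.mk (JoinRel P Q) (p, u, q) : Join P Q) = Quot.mk _ (p', u', q') :=
        Quot.sound (Or.inl ⟨hu, hu', hp1⟩)
      exact congrArg (Quot.mk _) (Prod.ext hjoin (Subtype.ext hrr))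
  · -- first components collapse : u = 1 side
    have hq1 : q = q' := congrArg Prod.fst hq
    have hqv : (r : ℝ) * (u : ℝ) = (r' : ℝ) * (u' : ℝ) :=
      congrArg (fun z => ((z.2 : {t : ℝ // 0 ≤ t}) : ℝ)) hq
    have hp1 : (r : ℝ) * (1 - (u : ℝ)) = 0 := hp.1
    have hp2 : (r' : ℝ) * (1 - (u' : ℝ)) = 0 := hp.2
    have hrr : (r : ℝ) = (r' : ℝ) := by rw [hsum, hsum', hp1, hp2, hqv]
    by_cases hz : (r : ℝ) = 0
    · exact Quot.sound ⟨hz, by rw [← hrr]; exact hz⟩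
    · have hu : (u : ℝ) = 1 := by
        rcases mul_eq_zero.1 hp1 with h | h
        · exact absurd h hz
        · linarith
      have hu' : (u' : ℝ) = 1 := by
        rcases mul_eq_zero.1 hp2 with h | h
        · exact absurd h (hrr ▸ hz)
        · linarith
      have hjoin : (Quot.mk (JoinRel P Q) (p, u, q) : Join P Q) = Quot.mk _ (p', u', q') :=
        Quot.sound (Or.inr ⟨hu, hu', hq1⟩)
      exact congrArg (Quot.mk _) (Prod.ext hjoin (Subtype.ext hrr))
  · -- everything collapses
    have ha1 : (r : ℝ) * (1 - (u : ℝ)) = 0 := hp.1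
    have ha2 : (r' : ℝ) * (1 - (u' : ℝ)) = 0 := hp.2
    have hb1 : (r : ℝ) * (u : ℝ) = 0 := hq.1
    have hb2 : (r' : ℝ) * (u' : ℝ) = 0 := hq.2
    have hz : (r : ℝ) = 0 := by rw [hsum, ha1, hb1, add_zero]
    have hz' : (r' : ℝ) = 0 := by rw [hsum', ha2, hb2, add_zero]
    exact Quot.sound ⟨hz, hz'⟩

variable [CompactSpace P] [T2Space P] [CompactSpace Q] [T2Space Q]

lemma hcore_isClosedMap : IsClosedMap (hcore P Q) := by
  haveI : CompactSpace (Set.Icc (0:ℝ) 1) := isCompact_iff_compactSpace.1 isCompact_Icc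
  intro C hC
  refine isClosed_of_closure_subset fun y hy => ?_
  set s := rad P y.1 with hs
  set t := rad Q y.2 with ht
  have hO : IsOpen {z : Cone P × Cone Q | rad P z.1 < s + 1 ∧ rad Q z.2 < t + 1} := by
    have c1 : Continuous fun z : Cone P × Cone Q => rad P z.1 :=
      (continuous_rad P).comp continuous_fst
    have c2 : Continuous fun z : Cone P × Cone Q => rad Q z.2 :=
      (continuous_rad Q).comp continuous_snd
    exact (isOpen_lt c1 continuous_const).inter (isOpen_lt c2 continuous_const)
  have hyO : y ∈ {z : Cone P × Cone Q | rad P z.1 < s + 1 ∧ rad Q z.2 < t + 1} :=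
    ⟨lt_add_one _, lt_add_one _⟩
  have hD : IsCompact (Set.univ ×ˢ {x : {t : ℝ // 0 ≤ t} | (x : ℝ) ≤ s + t + 2} :
      Set ((P × (Set.Icc (0:ℝ) 1) × Q) × {t : ℝ // 0 ≤ t})) := by
    refine isCompact_univ.prod ?_
    rw [Topology.IsEmbedding.subtypeVal.isCompact_iff]
    have himg : Subtype.val '' {x : {t : ℝ // 0 ≤ t} | (x : ℝ) ≤ s + t + 2}
        = Set.Icc (0:ℝ) (s + t + 2) := by
      ext z
      constructor
      · rintro ⟨x, hx, rfl⟩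
        exact ⟨x.2, hx⟩
      · rintro ⟨hz0, hz⟩
        exact ⟨⟨z, hz0⟩, hz, rfl⟩
    rw [himg]
    exact isCompact_Icc
  have hsub : hcore P Q ⁻¹' {z : Cone P × Cone Q | rad P z.1 < s + 1 ∧ rad Q z.2 < t + 1}
      ⊆ (Set.univ ×ˢ {x : {t : ℝ // 0 ≤ t} | (x : ℝ) ≤ s + t + 2}) := by
    rintro ⟨⟨p, u, q⟩, r⟩ ⟨hx1, hx2⟩
    have b1 : (r : ℝ) * (1 - (u : ℝ)) < s + 1 := hx1
    have b2 : (r : ℝ) * (u : ℝ) < t + 1 := hx2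
    refine ⟨trivial, ?_⟩
    show (r : ℝ) ≤ s + t + 2
    nlinarith
  have h1 : y ∈ closure ({z : Cone P × Cone Q | rad P z.1 < s + 1 ∧ rad Q z.2 < t + 1}
      ∩ hcore P Q '' C) := hO.inter_closure ⟨hyO, hy⟩
  have h2 : {z : Cone P × Cone Q | rad P z.1 < s + 1 ∧ rad Q z.2 < t + 1} ∩ hcore P Q '' C
      ⊆ hcore P Q '' (C ∩ (Set.univ ×ˢ {x : {t : ℝ // 0 ≤ t} | (x : ℝ) ≤ s + t + 2})) := by
    rintro z ⟨hzO, w, hwC, rfl⟩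
    exact ⟨w, ⟨hwC, hsub hzO⟩, rfl⟩
  have h3 : IsCompact (hcore P Q ''
      (C ∩ (Set.univ ×ˢ {x : {t : ℝ // 0 ≤ t} | (x : ℝ) ≤ s + t + 2}))) :=
    (hD.inter_left hC).image (hcore_cont P Q)
  have h4 := closure_mono h2 h1
  rw [h3.isClosed.closure_eq] at h4
  exact Set.image_mono Set.inter_subset_left h4

lemma gmap_isClosedMap : IsClosedMap (gmap P Q) := by
  intro C hC
  have cont : Continuous (fun w : (P × (Set.Icc (0:ℝ) 1) × Q) × {t : ℝ // 0 ≤ t} =>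
      (Quot.mk (ConeRel (Join P Q)) (Quot.mk (JoinRel P Q) w.1, w.2) : Cone (Join P Q))) :=
    continuous_quot_mk.comp ((continuous_quot_mk.comp continuous_fst).prodMk continuous_snd)
  have himg : gmap P Q '' C = hcore P Q ''
      ((fun w : (P × (Set.Icc (0:ℝ) 1) × Q) × {t : ℝ // 0 ≤ t} =>
        (Quot.mk (ConeRel (Join P Q)) (Quot.mk (JoinRel P Q) w.1, w.2) : Cone (Join P Q)))
        ⁻¹' C) := by
    have hmk : ∀ c : Cone (Join P Q), ∃ w : (P × (Set.Icc (0:ℝ) 1) × Q) × {t : ℝ // 0 ≤ t},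
        (Quot.mk (ConeRel (Join P Q)) (Quot.mk (JoinRel P Q) w.1, w.2) : Cone (Join P Q)) = c := by
      intro c
      induction c using Quot.ind with | _ a => ?_
      obtain ⟨j, r⟩ := a
      induction j using Quot.ind with | _ x => exact ⟨(x, r), rfl⟩
    ext z
    constructor
    · rintro ⟨c, hcC, rfl⟩
      obtain ⟨w, rfl⟩ := hmk c
      exact ⟨w, hcC, rfl⟩
    · rintro ⟨w, hw, rfl⟩
      exact ⟨_, hw, rfl⟩
  rw [himg]
  exact hcore_isClosedMap P Q _ (hC.preimage cont)

end Main

end StmtAux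

/-- For compact Hausdorff `P` and `Q`, there is a homeomorphism
`C(P) × C(Q) ≅ C(P ⋆ Q)`. -/
theorem stmt2 (P Q : Type) [TopologicalSpace P] [TopologicalSpace Q]
    [CompactSpace P] [T2Space P] [CompactSpace Q] [T2Space Q] :
    Nonempty ((Cone P × Cone Q) ≃ₜ Cone (Join P Q)) := by
  let e : Cone (Join P Q) ≃ (Cone P × Cone Q) :=
    Equiv.ofBijective _ ⟨StmtAux.gmap_injective P Q, StmtAux.gmap_surjective P Q⟩
  have hcont : Continuous e := StmtAux.gmap_cont P Q
  have hinv : Continuous e.symm := by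
    rw [continuous_iff_isClosed]
    intro s hs
    have himg : e.symm ⁻¹' s = ⇑e '' s := (Equiv.image_eq_preimage_symm e s).symm
    rw [himg]
    exact StmtAux.gmap_isClosedMap P Q s hs
  exact ⟨(Homeomorph.mk e hcont hinv).symm⟩
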